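/- The problem minimize Σ_m b_m² subject to (√D/K) Σ_m |K_m v_m − c_m b_m| ≤ R and 0 ≤ b_m ≤ √P_0 has the same optimal value as the problem minimize Σ_m b_m² subject to (√D/K) Σ_m (K_m v_m − c_m b_m) ≤ R and 0 ≤ b_m ≤ min{√P_0, K_m v_m / c_m}. -/

import Mathlib

/-- Proposition 4: the transmit-magnitude problem with absolute values has the same optimal
value as the convex QP obtained by removing the absolute values and restricting
`b_m ≤ min{√P₀, K_m v_m / c_m}`. -/
theorem stmt_6 {M : ℕ}
    (D K R P0 : ℝ) (hD : 0 < D) (hK : 0 < K) (hR : 0 ≤ R) (hP0 : 0 < P0)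
    (Km v c : Fin M → ℝ) (hKm : ∀ m, 0 < Km m) (hv : ∀ m, 0 < v m) (hc : ∀ m, 0 < c m)
    (S1 S2 : Set (Fin M → ℝ))
    (hS1 : S1 = {b | Real.sqrt D / K * ∑ m, |Km m * v m - c m * b m| ≤ R ∧
        ∀ m, 0 ≤ b m ∧ b m ≤ Real.sqrt P0})
    (hS2 : S2 = {b | Real.sqrt D / K * ∑ m, (Km m * v m - c m * b m) ≤ R ∧
        ∀ m, 0 ≤ b m ∧ b m ≤ min (Real.sqrt P0) (Km m * v m / c m)})
    (hne1 : S1.Nonempty) (hne2 : S2.Nonempty) :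
    sInf ((fun b : Fin M → ℝ => ∑ m, (b m) ^ 2) '' S1) =
      sInf ((fun b : Fin M → ℝ => ∑ m, (b m) ^ 2) '' S2) := by
  have hcoef : 0 ≤ Real.sqrt D / K := div_nonneg (Real.sqrt_nonneg D) hK.le
  have hbdd : ∀ S : Set (Fin M → ℝ),
      BddBelow ((fun b : Fin M → ℝ => ∑ m, (b m) ^ 2) '' S) := by
    intro S
    refine ⟨0, ?_⟩
    rintro x ⟨b, _, rfl⟩
    exact Finset.sum_nonneg fun m _ => sq_nonneg _
  -- S2 ⊆ S1
  have hsub : S2 ⊆ S1 := by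
    intro b hb
    rw [hS2] at hb
    rw [hS1]
    obtain ⟨h1, h2⟩ := hb
    refine ⟨?_, fun m => ⟨(h2 m).1, le_trans (h2 m).2 (min_le_left _ _)⟩⟩
    have : ∀ m ∈ Finset.univ, |Km m * v m - c m * b m| = Km m * v m - c m * b m := by
      intro m _
      rw [abs_of_nonneg]
      have hle : b m ≤ Km m * v m / c m := le_trans (h2 m).2 (min_le_right _ _)
      have := (le_div_iff₀ (hc m)).mp hle
      linarith [this]
    rw [Finset.sum_congr rfl this]
    exact h1
  apply le_antisymm
  · exact csInf_le_csInf (hbdd S1) (hne2.image _) (Set.image_mono hsub)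
  · apply le_csInf (hne1.image _)
    rintro x ⟨b, hb, rfl⟩
    rw [hS1] at hb
    obtain ⟨h1, h2⟩ := hb
    set b' : Fin M → ℝ := fun m => min (b m) (Km m * v m / c m) with hb'
    have hmem : b' ∈ S2 := by
      rw [hS2]
      constructor
      · refine le_trans ?_ h1
        apply mul_le_mul_of_nonneg_left _ hcoef
        apply Finset.sum_le_sum
        intro m _
        rcases le_total (b m) (Km m * v m / c m) with h | h
        · simp only [hb', min_eq_left h]
          exact le_abs_self _
        · simp only [hb', min_eq_right h]
          rw [mul_div_cancel₀ _ (hc m).ne']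
          simp [abs_nonneg]
      · intro m
        refine ⟨le_min (h2 m).1 ?_, ?_⟩
        · exact div_nonneg (mul_nonneg (hKm m).le (hv m).le) (hc m).le
        · exact le_min (min_le_of_left_le (h2 m).2) (min_le_right _ _)
    have hobj : ∑ m, (b' m) ^ 2 ≤ ∑ m, (b m) ^ 2 := by
      apply Finset.sum_le_sum
      intro m _
      apply pow_le_pow_left₀ (le_min (h2 m).1 (div_nonneg (mul_nonneg (hKm m).le (hv m).le) (hc m).le)) (min_le_left _ _)
    exact le_trans (csInf_le (hbdd S2) ⟨b', hmem, rfl⟩) hobj
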